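/- Expected tokens per speculative iteration: let γ ≥ 1 be an integer and let X_1, …, X_γ be independent Bernoulli(α) random variables with α ∈ [0,1) (X_k = 1 meaning the k-th drafted token is accepted). Let N := 1 + max{ k ∈ {0,…,γ} : X_1 = ⋯ = X_k = 1 } denote the number of tokens produced in one verifier iteration (the accepted prefix plus one token from the verifier). Then E[N] = Σ_{k=0}^{γ} α^k = (1 − α^{γ+1})/(1 − α). -/

import Mathlib

open MeasureTheory ProbabilityTheory

/-- Expected tokens per speculative iteration: let `γ ≥ 1`, let `X 1, …, X γ` be
independent Bernoulli(α) random variables (`X k ω = true` meaning the `k`-th drafted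
token is accepted) with `α ∈ [0,1)`, and let
`N ω := 1 + max { k ∈ {0,…,γ} : X 1 ω = ⋯ = X k ω = true }` be the number of tokens
produced in one verifier iteration (the accepted prefix plus one verifier token). Then
`E[N] = ∑_{k=0}^{γ} α^k = (1 - α^(γ+1))/(1 - α)`. -/
theorem expected_tokens_per_iteration {Ω : Type*} [MeasurableSpace Ω]
    (μ : Measure Ω) [IsProbabilityMeasure μ]
    (γ : ℕ) (hγ : 1 ≤ γ) (α : ℝ) (hα0 : 0 ≤ α) (hα1 : α < 1)
    (X : Fin γ → Ω → Bool)
    (hXmeas : ∀ k, Measurable (X k))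
    (hindep : iIndepFun X μ)
    (hbern : ∀ k, μ {ω | X k ω = true} = ENNReal.ofReal α)
    (N : Ω → ℕ)
    (hN : ∀ ω, N ω =
      1 + Nat.findGreatest (fun k => ∀ i : Fin γ, (i : ℕ) < k → X i ω = true) γ) :
    (∫ ω, (N ω : ℝ) ∂μ) = ∑ k ∈ Finset.range (γ + 1), α ^ k ∧
    (∑ k ∈ Finset.range (γ + 1), α ^ k) = (1 - α ^ (γ + 1)) / (1 - α) := by
  set A : ℕ → Set Ω := fun k => {ω | ∀ i : Fin γ, (i : ℕ) < k → X i ω = true} with hA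
  have hAinter : ∀ k, A k = ⋂ i ∈ Finset.univ.filter (fun i : Fin γ => (i : ℕ) < k),
      X i ⁻¹' {true} := by
    intro k
    ext ω
    simp [hA, Set.mem_iInter]
  have hAmeas : ∀ k, MeasurableSet (A k) := by
    intro k
    rw [hAinter]
    exact Finset.measurableSet_biInter _ fun i _ => (hXmeas i) (by trivial)
  have hcard : ∀ k ≤ γ, (Finset.univ.filter (fun i : Fin γ => (i : ℕ) < k)).card = k := by
    intro k hk
    rw [Finset.card_filter, Fin.sum_univ_eq_sum_range (fun i => if i < k then 1 else 0),
      ← Finset.sum_filter]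
    have : (Finset.range γ).filter (fun i => i < k) = Finset.range k := by
      ext x; simp; omega
    simp [this]
  have hprob : ∀ k ≤ γ, μ (A k) = ENNReal.ofReal (α ^ k) := by
    intro k hk
    rw [hAinter]
    rw [hindep.meas_biInter (fun i _ => ⟨{true}, trivial, rfl⟩)]
    have : ∀ i ∈ Finset.univ.filter (fun i : Fin γ => (i : ℕ) < k),
        μ (X i ⁻¹' {true}) = ENNReal.ofReal α := by
      intro i _
      have := hbern i
      simpa [Set.preimage, Set.mem_setOf_eq] using this
    rw [Finset.prod_congr rfl this, Finset.prod_const, hcard k hk,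
      ← ENNReal.ofReal_pow hα0]
  -- pointwise decomposition
  have hNsum : ∀ ω, (N ω : ℝ) =
      ∑ k ∈ Finset.range (γ + 1), (A k).indicator (fun _ => (1 : ℝ)) ω := by
    intro ω
    set M := Nat.findGreatest (fun k => ∀ i : Fin γ, (i : ℕ) < k → X i ω = true) γ with hM
    have hMle : M ≤ γ := Nat.findGreatest_le γ
    have hiff : ∀ k ≤ γ, (ω ∈ A k ↔ k ≤ M) := by
      intro k hk
      constructor
      · intro h
        exact Nat.le_findGreatest hk h
      · intro h i hik
        have hPM : ∀ i : Fin γ, (i : ℕ) < M → X i ω = true :=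
          Nat.findGreatest_spec (P := fun k => ∀ i : Fin γ, (i : ℕ) < k → X i ω = true)
            (Nat.zero_le γ) (by intro i hi; omega)
        exact hPM i (by omega)
    have : ∀ k ∈ Finset.range (γ + 1),
        (A k).indicator (fun _ => (1 : ℝ)) ω = if k ≤ M then 1 else 0 := by
      intro k hk
      simp only [Finset.mem_range] at hk
      by_cases h : k ≤ M
      · rw [Set.indicator_of_mem ((hiff k (by omega)).mpr h)]
        simp [h]
      · rw [Set.indicator_of_notMem (fun hmem => h ((hiff k (by omega)).mp hmem))]
        simp [h]
    rw [Finset.sum_congr rfl this, ← Finset.sum_filter]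
    have : Finset.filter (fun k => k ≤ M) (Finset.range (γ + 1)) = Finset.range (M + 1) := by
      ext x; simp; omega
    rw [this]
    simp [hN ω, ← hM]
    push_cast
    ring
  have hint : ∀ k ∈ Finset.range (γ + 1),
      Integrable ((A k).indicator (fun _ => (1 : ℝ))) μ := by
    intro k _
    exact (integrable_indicator_iff (hAmeas k)).2 (integrableOn_const (measure_lt_top μ _).ne)
  constructor
  · calc (∫ ω, (N ω : ℝ) ∂μ)
        = ∫ ω, ∑ k ∈ Finset.range (γ + 1), (A k).indicator (fun _ => (1 : ℝ)) ω ∂μ := by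
          exact integral_congr_ae (Filter.Eventually.of_forall hNsum)
      _ = ∑ k ∈ Finset.range (γ + 1), ∫ ω, (A k).indicator (fun _ => (1 : ℝ)) ω ∂μ :=
          integral_finset_sum _ hint
      _ = ∑ k ∈ Finset.range (γ + 1), α ^ k := by
          refine Finset.sum_congr rfl fun k hk => ?_
          simp only [Finset.mem_range] at hk
          rw [integral_indicator_const _ (hAmeas k), measureReal_def, hprob k (by omega), smul_eq_mul, mul_one,
            ENNReal.toReal_ofReal (pow_nonneg hα0 k)]
  · rw [geom_sum_eq hα1.ne]
    rw [← neg_div_neg_eq]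
    ring_nf
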